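/- Let λ be a (k,r,k+1)-admissible partition in n = k+1 variables with r ≥ 2 and gcd(k+1,r-1)=1, and let β = -(r-1)/(k+1). Then in the specialization formula P_λ(1,...,1;β) = ∏_{(i,j)∈λ} ((n-i+1)β + j - 1)/((λ'_j - i + 1)β + λ_i - j), the factor in the numerator corresponding to the node (1, r) vanishes, while no factor of the denominator vanishes; hence P_λ(1,...,1;β(k,r)) = 0. -/

import Mathlib

set_option maxHeartbeats 1000000 in
/-- For a (k,r,k+1)-admissible partition λ in n = k+1 variables and
β = -(r-1)/(k+1), in the specialization formula
P_λ(1,...,1;β) = ∏_{(i,j)∈λ} ((n-i+1)β + j - 1)/((λ'_j - i + 1)β + λ_i - j)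
the numerator factor at the node (1,r) vanishes, no denominator factor vanishes,
and hence the whole product is 0. -/
theorem specialization_vanishes (k r : ℕ) (hk : 1 ≤ k) (hr : 2 ≤ r)
    (hcop : Nat.Coprime (k + 1) (r - 1))
    (β : ℚ) (hβ : β = -((r : ℚ) - 1) / ((k : ℚ) + 1))
    (lam : ℕ → ℕ)
    (hmono : ∀ i, 1 ≤ i → lam (i + 1) ≤ lam i)
    (hadm : lam (1 + k) + r ≤ lam 1)
    (conj : ℕ → ℕ)
    (hconj : ∀ j, conj j = ((Finset.Icc 1 (k + 1)).filter (fun m => j ≤ lam m)).card) :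
    ((((k : ℚ) + 1) - 1 + 1) * β + (r : ℚ) - 1 = 0) ∧
    (∀ i j : ℕ, 1 ≤ i → i ≤ k + 1 → 1 ≤ j → j ≤ lam i →
      ((conj j : ℚ) - (i : ℚ) + 1) * β + (lam i : ℚ) - (j : ℚ) ≠ 0) ∧
    (∏ i ∈ Finset.Icc 1 (k + 1), ∏ j ∈ Finset.Icc 1 (lam i),
      ((((k : ℚ) + 1) - (i : ℚ) + 1) * β + (j : ℚ) - 1) /
        (((conj j : ℚ) - (i : ℚ) + 1) * β + (lam i : ℚ) - (j : ℚ))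
      = 0) := by
  have hk1 : ((k : ℚ) + 1) ≠ 0 := by positivity
  have hnum : (((k : ℚ) + 1) - 1 + 1) * β + (r : ℚ) - 1 = 0 := by
    rw [hβ]; field_simp; ring
  -- antitone lemma
  have hanti : ∀ a b : ℕ, 1 ≤ a → a ≤ b → lam b ≤ lam a := by
    intro a b ha hab
    induction b with
    | zero => exact absurd hab (by omega)
    | succ n ih =>
      rcases Nat.lt_or_ge n a with h | h
      · have : a = n + 1 := by omega
        simp [this]
      · exact le_trans (hmono n (by omega)) (ih h)
  refine ⟨hnum, ?_, ?_⟩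
  · intro i j hi hik hj hjlam heq
    -- conj j ≥ i
    have hsub : Finset.Icc 1 i ⊆ (Finset.Icc 1 (k + 1)).filter (fun m => j ≤ lam m) := by
      intro m hm
      simp only [Finset.mem_Icc] at hm
      simp only [Finset.mem_filter, Finset.mem_Icc]
      exact ⟨⟨hm.1, le_trans hm.2 hik⟩, le_trans hjlam (hanti m i hm.1 hm.2)⟩
    have hge : i ≤ conj j := by
      rw [hconj]
      calc i = (Finset.Icc 1 i).card := by simp
      _ ≤ _ := Finset.card_le_card hsub
    have hle : conj j ≤ k + 1 := by
      rw [hconj]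
      calc _ ≤ (Finset.Icc 1 (k + 1)).card := Finset.card_le_card (Finset.filter_subset _ _)
      _ = k + 1 := by simp
    -- integer equation
    have heqQ : ((conj j : ℚ) - i + 1) * ((r : ℚ) - 1)
        = ((lam i : ℚ) - j) * ((k : ℚ) + 1) := by
      rw [hβ] at heq
      field_simp at heq
      linarith [heq]
    have heqZ : ((conj j : ℤ) - i + 1) * ((r : ℤ) - 1)
        = ((lam i : ℤ) - j) * ((k : ℤ) + 1) := by exact_mod_cast heqQ
    have hr1 : ((r : ℤ) - 1) = ((r - 1 : ℕ) : ℤ) := by omega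
    have hcopZ : IsCoprime ((k : ℤ) + 1) ((r : ℤ) - 1) := by
      rw [hr1, Int.isCoprime_iff_gcd_eq_one]
      exact_mod_cast hcop
    have hdvd : ((k : ℤ) + 1) ∣ ((conj j : ℤ) - i + 1) := by
      refine hcopZ.dvd_of_dvd_mul_right ?_
      exact ⟨(lam i : ℤ) - j, by linarith [heqZ]⟩
    have hAeq : (conj j : ℤ) - i + 1 = (k : ℤ) + 1 := by
      rcases hdvd with ⟨c, hc⟩
      have hkpos : (0 : ℤ) < (k : ℤ) + 1 := by positivity
      have hc1 : c = 1 := by nlinarith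
      subst hc1
      rw [mul_one] at hc
      omega
    -- then i = 1 and conj j = k + 1
    have hi1 : i = 1 := by omega
    have hcj : conj j = k + 1 := by omega
    have hfilt : (Finset.Icc 1 (k + 1)).filter (fun m => j ≤ lam m) = Finset.Icc 1 (k + 1) := by
      apply Finset.eq_of_subset_of_card_le (Finset.filter_subset _ _)
      rw [← hconj, hcj]; simp
    have hjk : j ≤ lam (k + 1) := by
      have : (k + 1) ∈ (Finset.Icc 1 (k + 1)).filter (fun m => j ≤ lam m) := by
        rw [hfilt]; simp
      simpa using (Finset.mem_filter.mp this).2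
    have hBeq : (lam i : ℤ) - j = (r : ℤ) - 1 := by
      have hkpos : (0 : ℤ) < (k : ℤ) + 1 := by positivity
      nlinarith [heqZ, hAeq]
    have h1k : lam (1 + k) = lam (k + 1) := by rw [Nat.add_comm]
    rw [hi1] at hBeq
    omega
  · rw [Finset.prod_eq_zero_iff]
    refine ⟨1, Finset.mem_Icc.mpr ⟨le_refl 1, by omega⟩, ?_⟩
    rw [Finset.prod_eq_zero_iff]
    refine ⟨r, Finset.mem_Icc.mpr ⟨by omega, by omega⟩, ?_⟩
    have h0 : (((k : ℚ) + 1) - ((1 : ℕ) : ℚ) + 1) * β + ((r : ℕ) : ℚ) - 1 = 0 := by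
      push_cast; linarith [hnum]
    rw [div_eq_zero_iff]; left; exact h0
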